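/- Any B-presheaf on a graph equipped with the topology generated by open stars is automatically a B-sheaf; that is, it satisfies both the locality and gluing conditions with respect to covers by basic open sets. -/
import Mathlib


/-- The open star of a vertex `v`: the vertex together with its incident edges,
viewed as a set of points of the graph (points are vertices and edges). -/
def openStar {V E : Type*} (inc : E → V → Prop) (v : V) : Set (V ⊕ E) :=
  insert (Sum.inl v) {x | ∃ e, x = Sum.inr e ∧ inc e v}

/-- The basic open set corresponding to an edge `e` (the intersection of the open
stars of its endpoints). -/
def edgeOpen {V E : Type*} (e : E) : Set (V ⊕ E) := {Sum.inr e}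

/-- Basic open sets of the star topology on a graph: open stars and the open sets
corresponding to edges. -/
def IsBasic {V E : Type*} (inc : E → V → Prop) (U : Set (V ⊕ E)) : Prop :=
  (∃ v, U = openStar inc v) ∨ (∃ e, U = edgeOpen (V := V) e)

/-- A `B`-presheaf on a graph with the star topology: an assignment of a set of
sections to each basic open set, together with restriction maps satisfying the
identity and composition laws. -/
structure BPresheaf {V E : Type*} (inc : E → V → Prop) where
  F : Set (V ⊕ E) → Type*
  res : ∀ {U W : Set (V ⊕ E)}, IsBasic inc U → IsBasic inc W → W ⊆ U → F U → F W
  res_id : ∀ {U : Set (V ⊕ E)} (hU : IsBasic inc U) (s : F U),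
    res hU hU (subset_refl U) s = s
  res_comp : ∀ {U W T : Set (V ⊕ E)} (hU : IsBasic inc U) (hW : IsBasic inc W)
    (hT : IsBasic inc T) (hWU : W ⊆ U) (hTW : T ⊆ W) (s : F U),
    res hW hT hTW (res hU hW hWU s) = res hU hT (hTW.trans hWU) s

theorem self_mem_of_cover {V E : Type*} {inc : E → V → Prop} {U : Set (V ⊕ E)}
    (hU : IsBasic inc U) {𝒰 : Set (Set (V ⊕ E))}
    (h𝒰 : ∀ W ∈ 𝒰, IsBasic inc W) (hcover : ⋃₀ 𝒰 = U) : U ∈ 𝒰 := by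
  rcases hU with ⟨v, rfl⟩ | ⟨e, rfl⟩
  · have hv : Sum.inl v ∈ ⋃₀ 𝒰 := by
      rw [hcover]; exact Set.mem_insert _ _
    rcases hv with ⟨W, hW, hvW⟩
    rcases h𝒰 W hW with ⟨w, rfl⟩ | ⟨e, rfl⟩
    · rcases hvW with h | ⟨e, he, _⟩
      · cases Sum.inl.inj h; exact hW
      · exact absurd he (by simp)
    · exact absurd hvW (by simp [edgeOpen])
  · have hv : Sum.inr e ∈ ⋃₀ 𝒰 := by
      rw [hcover]; rfl
    rcases hv with ⟨W, hW, hvW⟩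
    have hWU : W ⊆ edgeOpen (V := V) e := hcover ▸ Set.subset_sUnion_of_mem hW
    rcases h𝒰 W hW with ⟨w, rfl⟩ | ⟨e', rfl⟩
    · exact absurd (hWU (Set.mem_insert _ _)) (by simp [edgeOpen])
    · cases Sum.inr.inj hvW; exact hW

/-- Any `B`-presheaf on a graph equipped with the topology
generated by open stars is automatically a `B`-sheaf: it satisfies both the
locality and gluing conditions with respect to covers by basic open sets
(compatibility on overlaps being expressed via all basic open sets contained in
the intersection of two members of the cover). -/
theorem bpresheaf_is_bsheaf {V E : Type*} (inc : E → V → Prop)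
    (P : BPresheaf inc) :
    -- locality
    (∀ (U : Set (V ⊕ E)) (hU : IsBasic inc U) (𝒰 : Set (Set (V ⊕ E)))
      (h𝒰 : ∀ W ∈ 𝒰, IsBasic inc W) (hcover : ⋃₀ 𝒰 = U) (s t : P.F U),
      (∀ W (hW : W ∈ 𝒰),
        P.res hU (h𝒰 W hW) ((Set.subset_sUnion_of_mem hW).trans hcover.subset) s =
        P.res hU (h𝒰 W hW) ((Set.subset_sUnion_of_mem hW).trans hcover.subset) t) →
      s = t) ∧
    -- gluing
    (∀ (U : Set (V ⊕ E)) (hU : IsBasic inc U) (𝒰 : Set (Set (V ⊕ E)))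
      (h𝒰 : ∀ W ∈ 𝒰, IsBasic inc W) (hcover : ⋃₀ 𝒰 = U)
      (sec : ∀ W, W ∈ 𝒰 → P.F W),
      (∀ W (hW : W ∈ 𝒰) W' (hW' : W' ∈ 𝒰) (T : Set (V ⊕ E)) (hT : IsBasic inc T)
        (hTW : T ⊆ W) (hTW' : T ⊆ W'),
        P.res (h𝒰 W hW) hT hTW (sec W hW) =
        P.res (h𝒰 W' hW') hT hTW' (sec W' hW')) →
      ∃ s : P.F U, ∀ W (hW : W ∈ 𝒰),
        P.res hU (h𝒰 W hW) ((Set.subset_sUnion_of_mem hW).trans hcover.subset) s =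
          sec W hW) := by
  constructor
  · intro U hU 𝒰 h𝒰 hcover s t hst
    have hUmem : U ∈ 𝒰 := self_mem_of_cover hU h𝒰 hcover
    have := hst U hUmem
    rwa [P.res_id, P.res_id] at this
  · intro U hU 𝒰 h𝒰 hcover sec hcompat
    have hUmem : U ∈ 𝒰 := self_mem_of_cover hU h𝒰 hcover
    refine ⟨sec U hUmem, fun W hW => ?_⟩
    have := hcompat U hUmem W hW W (h𝒰 W hW)
      ((Set.subset_sUnion_of_mem hW).trans hcover.subset) (subset_refl W)
    rw [P.res_id] at this
    exact this
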